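/- If X is a Banach space with n(X) = 1 satisfying the local point property L_{p,p}-nu, then the norm of X is strongly subdifferentiable at every point; specifically, for every x₀ ∈ S_X and ε > 0 there is η > 0 such that whenever x* ∈ S_{X*} satisfies |x*(x₀)| > 1 − η, there exists z* ∈ S_{X*} with |z*(x₀)| = 1 and ‖z* − x*‖ < ε. -/

import Mathlib

noncomputable section

open Filter Topology

variable (𝕜 : Type*) [RCLike 𝕜] (X : Type*) [NormedAddCommGroup X] [NormedSpace 𝕜 X]

/-- `(x, f)` is a state of `X`: `x ∈ S_X`, `f ∈ S_{X*}`, `f x = 1`. -/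
def IsState (x : X) (f : X →L[𝕜] 𝕜) : Prop :=
  ‖x‖ = 1 ∧ ‖f‖ = 1 ∧ f x = 1

/-- The numerical radius `v(T) = sup {|f (T x)| : (x, f) ∈ Π(X)}`. -/
def nrad (T : X →L[𝕜] X) : ℝ :=
  sSup {r : ℝ | ∃ x f, IsState 𝕜 X x f ∧ r = ‖f (T x)‖}

/-- The numerical index `n(X) = inf {v(T) : ‖T‖ = 1}`. -/
def nindex : ℝ :=
  sInf {r : ℝ | ∃ T : X →L[𝕜] X, ‖T‖ = 1 ∧ r = nrad 𝕜 X T}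

/-- The local point property L_{p,p}-nu. -/
def LppNu : Prop :=
  ∀ ε : ℝ, 0 < ε → ∀ (x : X) (f : X →L[𝕜] 𝕜), IsState 𝕜 X x f →
    ∃ η : ℝ, 0 < η ∧ ∀ T : X →L[𝕜] X, nrad 𝕜 X T = 1 → 1 - η < ‖f (T x)‖ →
      ∃ S : X →L[𝕜] X, nrad 𝕜 X S = 1 ∧ ‖f (S x)‖ = 1 ∧ ‖S - T‖ < ε

variable {𝕜 X}

lemma aux_bdd (T : X →L[𝕜] X) :
    BddAbove {r : ℝ | ∃ x f, IsState 𝕜 X x f ∧ r = ‖f (T x)‖} := by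
  refine ⟨‖T‖, ?_⟩
  rintro r ⟨x, f, ⟨hx, hf, _⟩, rfl⟩
  calc ‖f (T x)‖ ≤ ‖f‖ * ‖T x‖ := f.le_opNorm _
    _ ≤ 1 * (‖T‖ * ‖x‖) := by
        rw [hf]; gcongr; exact T.le_opNorm _
    _ = ‖T‖ := by rw [hx]; ring

lemma aux_nrad_le (T : X →L[𝕜] X) : nrad 𝕜 X T ≤ ‖T‖ := by
  apply Real.sSup_le _ (norm_nonneg T)
  rintro r ⟨x, f, ⟨hx, hf, _⟩, rfl⟩
  calc ‖f (T x)‖ ≤ ‖f‖ * ‖T x‖ := f.le_opNorm _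
    _ ≤ 1 * (‖T‖ * ‖x‖) := by
        rw [hf]; gcongr; exact T.le_opNorm _
    _ = ‖T‖ := by rw [hx]; ring

lemma aux_elem_le {T : X →L[𝕜] X} {x : X} {f : X →L[𝕜] 𝕜} (hs : IsState 𝕜 X x f) :
    ‖f (T x)‖ ≤ nrad 𝕜 X T :=
  le_csSup (aux_bdd T) ⟨x, f, hs, rfl⟩

lemma aux_nrad_smul_le (c : 𝕜) (T : X →L[𝕜] X) :
    nrad 𝕜 X (c • T) ≤ ‖c‖ * nrad 𝕜 X T := by
  by_cases hne : ∃ x f, IsState 𝕜 X x f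
  · obtain ⟨x₁, f₁, hs₁⟩ := hne
    have hn : (0:ℝ) ≤ nrad 𝕜 X T := le_trans (norm_nonneg _) (aux_elem_le hs₁)
    apply Real.sSup_le _ (mul_nonneg (norm_nonneg c) hn)
    rintro r ⟨x, f, hs, rfl⟩
    have : f ((c • T) x) = c * f (T x) := by simp
    rw [this, norm_mul]
    exact mul_le_mul_of_nonneg_left (aux_elem_le hs) (norm_nonneg c)
  · have : {r : ℝ | ∃ x f, IsState 𝕜 X x f ∧ r = ‖f ((c • T) x)‖} = ∅ := by
      ext r; simp only [Set.mem_setOf_eq, Set.mem_empty_iff_false, iff_false]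
      rintro ⟨x, f, hs, _⟩; exact hne ⟨x, f, hs⟩
    have h2 : (0:ℝ) ≤ nrad 𝕜 X T := by
      have : {r : ℝ | ∃ x f, IsState 𝕜 X x f ∧ r = ‖f (T x)‖} = ∅ := by
        ext r; simp only [Set.mem_setOf_eq, Set.mem_empty_iff_false, iff_false]
        rintro ⟨x, f, hs, _⟩; exact hne ⟨x, f, hs⟩
      rw [nrad, this, Real.sSup_empty]
    rw [nrad, this, Real.sSup_empty]
    exact mul_nonneg (norm_nonneg c) h2

/-- with `n(X) = 1`, a norm-one operator has numerical radius ≥ 1. -/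
lemma aux_nrad_ge (hn : nindex 𝕜 X = 1) {T : X →L[𝕜] X} (hT : ‖T‖ = 1) :
    1 ≤ nrad 𝕜 X T := by
  have hmem : nrad 𝕜 X T ∈ {r : ℝ | ∃ T : X →L[𝕜] X, ‖T‖ = 1 ∧ r = nrad 𝕜 X T} :=
    ⟨T, hT, rfl⟩
  have hbdd : BddBelow {r : ℝ | ∃ T : X →L[𝕜] X, ‖T‖ = 1 ∧ r = nrad 𝕜 X T} := by
    refine ⟨0, ?_⟩
    rintro r ⟨S, hS, rfl⟩
    apply Real.sSup_nonneg
    rintro r ⟨x, f, hs, rfl⟩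
    exact norm_nonneg _
  have := csInf_le hbdd hmem
  rw [nindex] at hn
  linarith [hn ▸ this]

/-- with `n(X) = 1`, `nrad T = 1` implies `‖T‖ = 1`. -/
lemma aux_norm_eq_one (hn : nindex 𝕜 X = 1) {T : X →L[𝕜] X} (hT : nrad 𝕜 X T = 1) :
    ‖T‖ = 1 := by
  have h1 : 1 ≤ ‖T‖ := hT ▸ aux_nrad_le T
  have hpos : (0:ℝ) < ‖T‖ := lt_of_lt_of_le one_pos h1
  have hne : T ≠ 0 := by intro h; rw [h] at hpos; simp at hpos
  set c : 𝕜 := (‖T‖ : 𝕜)⁻¹ with hc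
  have hcn : ‖c‖ = ‖T‖⁻¹ := by
    rw [hc, norm_inv, RCLike.norm_ofReal, abs_of_nonneg (norm_nonneg T)]
  have hcT : ‖c • T‖ = 1 := by
    rw [norm_smul c T, hcn, inv_mul_cancel₀ (ne_of_gt hpos)]
  have := aux_nrad_ge hn hcT
  have h2 := aux_nrad_smul_le c T
  rw [hT, hcn, mul_one] at h2
  have : (1:ℝ) ≤ ‖T‖⁻¹ := le_trans this h2
  have h3 : ‖T‖ ≤ 1 := by
    rw [← inv_inv (‖T‖)]
    exact inv_le_one_of_one_le₀ this
  linarith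

/-- if `n(X) = 1` and `X` has L_{p,p}-nu, then the norm of `X` is strongly
subdifferentiable at every point of the sphere, in the ε-η formulation. -/
theorem stmt16 [CompleteSpace X] (hn : nindex 𝕜 X = 1) (h : LppNu 𝕜 X) :
    ∀ x₀ : X, ‖x₀‖ = 1 → ∀ ε : ℝ, 0 < ε →
      ∃ η : ℝ, 0 < η ∧ ∀ f : X →L[𝕜] 𝕜, ‖f‖ = 1 → 1 - η < ‖f x₀‖ →
        ∃ z : X →L[𝕜] 𝕜, ‖z‖ = 1 ∧ ‖z x₀‖ = 1 ∧ ‖z - f‖ < ε := by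
  intro x₀ hx₀ ε hε
  have hx0ne : x₀ ≠ 0 := by
    intro hh; rw [hh, norm_zero] at hx₀; exact one_ne_zero hx₀.symm
  obtain ⟨g, hg1, hg2⟩ := exists_dual_vector 𝕜 x₀ (norm_ne_zero_iff.mpr hx0ne)
  have hgx : g x₀ = 1 := by rw [hg2, hx₀]; norm_num
  have hstate : IsState 𝕜 X x₀ g := ⟨hx₀, hg1, hgx⟩
  obtain ⟨η, hη, hmain⟩ := h ε hε x₀ g hstate
  refine ⟨η, hη, ?_⟩
  intro f hf hfx
  set T := f.smulRight x₀ with hT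
  have hTnorm : ‖T‖ = 1 := by
    rw [hT, ContinuousLinearMap.norm_smulRight_apply, hf, hx₀, one_mul]
  have hTrad : nrad 𝕜 X T = 1 :=
    le_antisymm (hTnorm ▸ aux_nrad_le T) (aux_nrad_ge hn hTnorm)
  have hgT : ‖g (T x₀)‖ = ‖f x₀‖ := by
    have : g (T x₀) = f x₀ * g x₀ := by
      simp [hT, ContinuousLinearMap.smulRight_apply, map_smul, smul_eq_mul]
    rw [this, hgx, mul_one]
  obtain ⟨S, hSrad, hSx, hST⟩ := hmain T hTrad (by rw [hgT]; exact hfx)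
  have hSnorm := aux_norm_eq_one hn hSrad
  have hcomp : g.comp T = f := by
    ext y
    simp [hT, ContinuousLinearMap.smulRight_apply, map_smul, smul_eq_mul, hgx]
  refine ⟨g.comp S, ?_, by simpa using hSx, ?_⟩
  · apply le_antisymm
    · calc ‖g.comp S‖ ≤ ‖g‖ * ‖S‖ := ContinuousLinearMap.opNorm_comp_le _ _
        _ = 1 := by rw [hg1, hSnorm, one_mul]
    · have h2 := (g.comp S).le_opNorm x₀
      rw [ContinuousLinearMap.comp_apply, hSx, hx₀, mul_one] at h2
      exact h2
  · calc ‖g.comp S - f‖ = ‖g.comp (S - T)‖ := by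
          rw [← hcomp, ← ContinuousLinearMap.comp_sub]
      _ ≤ ‖g‖ * ‖S - T‖ := ContinuousLinearMap.opNorm_comp_le _ _
      _ = ‖S - T‖ := by rw [hg1, one_mul]
      _ < ε := hST
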